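/- Let u ∈ C¹(Ω̄) be convex and fix x ∈ Ω. Then for every ε > 0 there exists N > 0 such that for all n > N and all y ∈ Ω: u(y) − u(x) ≥ (y − x)ᵀ∇_n u(x) − ε. In other words, ∇_n u(x) is an ε-subgradient of u at x for all sufficiently large n. -/

import Mathlib

open MeasureTheory Filter Topology Metric

noncomputable section

abbrev Euc (D : ℕ) := EuclideanSpace ℝ (Fin D)

/-- The standing hypotheses on the sequence of radial kernels `ρ n`. -/
structure IsKernelSeq (D : ℕ) (ρ : ℕ → Euc D → ℝ) : Prop where
  nonneg : ∀ n x, 0 ≤ ρ n x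
  radial : ∀ n x y, ‖x‖ = ‖y‖ → ρ n x = ρ n y
  integral_one : ∀ n, ∫ x, ρ n x = 1
  tail : ∀ δ : ℝ, 0 < δ →
    Tendsto (fun n => ∫ x in {x : Euc D | δ < ‖x‖}, ρ n x) atTop (nhds 0)

/-- A bounded, connected, simply connected open domain. -/
structure NiceDomain (D : ℕ) (Ω : Set (Euc D)) : Prop where
  isOpen : IsOpen Ω
  bounded : Bornology.IsBounded Ω
  connected : IsConnected Ω
  simplyConnected : SimplyConnectedSpace Ω

/-- The nonlocal gradient of `u` over the set `Ω` with kernel `ρ`. -/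
def nlGrad (D : ℕ) (Ω : Set (Euc D)) (ρ : Euc D → ℝ) (u : Euc D → ℝ) (x : Euc D) : Euc D :=
  (D : ℝ) • ∫ y in Ω, (((u x - u y) / ‖x - y‖ ^ 2) * ρ (x - y)) • (x - y)

namespace NLAux

variable {D : ℕ}

lemma norm_sq_eq (w : Euc D) : ‖w‖ ^ 2 = ∑ i, w i * w i := by
  rw [EuclideanSpace.norm_eq, Real.sq_sqrt (by positivity)]
  exact Finset.sum_congr rfl fun i _ => by rw [Real.norm_eq_abs, sq_abs, sq]

lemma abs_coord_le (w : Euc D) (i : Fin D) : |w i| ≤ ‖w‖ := by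
  have h1 : |w i| = Real.sqrt ((w i) ^ 2) := (Real.sqrt_sq_eq_abs _).symm
  rw [h1, EuclideanSpace.norm_eq]
  apply Real.sqrt_le_sqrt
  have := Finset.single_le_sum (f := fun j => ‖w j‖ ^ 2) (fun j _ => by positivity)
    (Finset.mem_univ i)
  simpa [Real.norm_eq_abs, sq_abs] using this

lemma ratio_abs_le (w : Euc D) (i j : Fin D) : |w i * w j / ‖w‖ ^ 2| ≤ 1 := by
  rcases eq_or_ne w 0 with rfl | hw
  · simp
  · have hw0 : 0 < ‖w‖ := norm_pos_iff.mpr hw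
    rw [abs_div, abs_of_nonneg (by positivity : (0:ℝ) ≤ ‖w‖ ^ 2), div_le_one (by positivity)]
    calc |w i * w j| = |w i| * |w j| := abs_mul _ _
    _ ≤ ‖w‖ * ‖w‖ := mul_le_mul (abs_coord_le w i) (abs_coord_le w j) (abs_nonneg _) hw0.le
    _ = ‖w‖ ^ 2 := (sq ‖w‖).symm

variable {ρ : Euc D → ℝ}

lemma meas_coord (i : Fin D) : Measurable fun w : Euc D => w i :=
  (EuclideanSpace.proj (𝕜 := ℝ) i).continuous.measurable

lemma integrable_coord_mul (hρ : Integrable ρ) (hnn : ∀ w, 0 ≤ ρ w) (i j : Fin D) :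
    Integrable (fun w : Euc D => w i * w j / ‖w‖ ^ 2 * ρ w) := by
  refine hρ.mono' ?_ (ae_of_all _ fun w => ?_)
  · exact ((((meas_coord i).mul (meas_coord j)).div
      ((measurable_norm).pow_const 2)).aestronglyMeasurable).mul hρ.1
  · rw [Real.norm_eq_abs, abs_mul, abs_of_nonneg (hnn w)]
    calc |w i * w j / ‖w‖ ^ 2| * ρ w ≤ 1 * ρ w :=
      mul_le_mul_of_nonneg_right (ratio_abs_le w i j) (hnn w)
    _ = ρ w := one_mul _


lemma integral_comp_isometry (e : Euc D ≃ₗᵢ[ℝ] Euc D) (f : Euc D → ℝ) :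
    ∫ w, f (e w) = ∫ w, f w :=
  e.measurePreserving.integral_comp e.toHomeomorph.measurableEmbedding f

lemma Q_offdiag (hrad : ∀ a b : Euc D, ‖a‖ = ‖b‖ → ρ a = ρ b) {i j : Fin D} (hij : i ≠ j) :
    ∫ w : Euc D, w i * w j / ‖w‖ ^ 2 * ρ w = 0 := by
  classical
  set e : Euc D ≃ₗᵢ[ℝ] Euc D := LinearIsometryEquiv.piLpCongrRight 2
    (fun k : Fin D => if k = i then LinearIsometryEquiv.neg ℝ else
      LinearIsometryEquiv.refl ℝ ℝ) with he
  have happ : ∀ (w : Euc D) (k : Fin D), e w k = if k = i then -(w k) else w k := by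
    intro w k
    rw [he, LinearIsometryEquiv.piLpCongrRight_apply]
    by_cases hk : k = i
    · subst hk; simp
    · simp [hk]
  have hkey : ∀ w : Euc D, (fun w : Euc D => w i * w j / ‖w‖ ^ 2 * ρ w) (e w)
      = -((fun w : Euc D => w i * w j / ‖w‖ ^ 2 * ρ w) w) := by
    intro w
    have h1 : e w i = -(w i) := by rw [happ]; simp
    have h2 : e w j = w j := by rw [happ]; simp [hij.symm]
    have h3 : ‖e w‖ = ‖w‖ := e.norm_map w
    have h4 : ρ (e w) = ρ w := hrad _ _ h3
    simp only [h1, h2, h3, h4]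
    ring
  have := integral_comp_isometry e (fun w : Euc D => w i * w j / ‖w‖ ^ 2 * ρ w)
  simp only [hkey, integral_neg] at this
  linarith

lemma Q_diag_eq (hrad : ∀ a b : Euc D, ‖a‖ = ‖b‖ → ρ a = ρ b) (i j : Fin D) :
    ∫ w : Euc D, w i * w i / ‖w‖ ^ 2 * ρ w = ∫ w : Euc D, w j * w j / ‖w‖ ^ 2 * ρ w := by
  classical
  set e : Euc D ≃ₗᵢ[ℝ] Euc D := LinearIsometryEquiv.piLpCongrLeft 2 ℝ ℝ (Equiv.swap i j) with he
  have happ : ∀ (w : Euc D) (k : Fin D), e w k = w (Equiv.swap i j k) := by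
    intro w k
    rw [he, LinearIsometryEquiv.piLpCongrLeft_apply]
    simp [Equiv.piCongrLeft'_apply, Equiv.symm_swap]
  have hkey : ∀ w : Euc D, (fun w : Euc D => w i * w i / ‖w‖ ^ 2 * ρ w) (e w)
      = (fun w : Euc D => w j * w j / ‖w‖ ^ 2 * ρ w) w := by
    intro w
    have h1 : e w i = w j := by rw [happ, Equiv.swap_apply_left]
    have h3 : ‖e w‖ = ‖w‖ := e.norm_map w
    simp only [h1, h3, hrad _ _ h3]
  have := integral_comp_isometry e (fun w : Euc D => w i * w i / ‖w‖ ^ 2 * ρ w)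
  simp only [hkey] at this
  exact this.symm


lemma Q_diag (hD : 0 < D) (hρ : Integrable ρ) (hnn : ∀ w, 0 ≤ ρ w)
    (hrad : ∀ a b : Euc D, ‖a‖ = ‖b‖ → ρ a = ρ b) (h1 : ∫ w, ρ w = 1)
    (hint : ∀ i j : Fin D, Integrable (fun w : Euc D => w i * w j / ‖w‖ ^ 2 * ρ w))
    (hdeq : ∀ i j : Fin D, ∫ w : Euc D, w i * w i / ‖w‖ ^ 2 * ρ w
      = ∫ w : Euc D, w j * w j / ‖w‖ ^ 2 * ρ w)
    (i : Fin D) :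
    ∫ w : Euc D, w i * w i / ‖w‖ ^ 2 * ρ w = (D : ℝ)⁻¹ := by
  haveI : Nontrivial (Euc D) := by
    refine ⟨0, EuclideanSpace.single ⟨0, hD⟩ 1, fun h => ?_⟩
    have := congrArg (fun v : Euc D => v ⟨0, hD⟩) h.symm
    simp [EuclideanSpace.single_apply] at this
  have hsum : ∑ j : Fin D, ∫ w : Euc D, w j * w j / ‖w‖ ^ 2 * ρ w = 1 := by
    rw [← integral_finset_sum _ (fun j _ => hint j j)]
    rw [← h1]
    apply integral_congr_ae
    have h0 : ∀ᵐ w : Euc D, w ≠ 0 := by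
      have : volume ({0} : Set (Euc D)) = 0 := measure_singleton 0
      filter_upwards [measure_eq_zero_iff_ae_notMem.mp this] with w hw using hw
    filter_upwards [h0] with w hw
    have hw2 : (0:ℝ) < ‖w‖ ^ 2 := pow_pos (norm_pos_iff.mpr hw) 2
    rw [← Finset.sum_mul, ← Finset.sum_div, ← norm_sq_eq, div_self hw2.ne', one_mul]
  have : ∑ j : Fin D, ∫ w : Euc D, w j * w j / ‖w‖ ^ 2 * ρ w
      = (D : ℝ) * ∫ w : Euc D, w i * w i / ‖w‖ ^ 2 * ρ w := by
    rw [Finset.sum_congr rfl (fun j _ => hdeq j i)]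
    simp [Finset.sum_const, Finset.card_univ, nsmul_eq_mul]
  rw [this] at hsum
  field_simp at hsum ⊢
  linarith


lemma normM_le (g : Euc D) (hnn : ∀ w, 0 ≤ ρ w) (w : Euc D) :
    ‖((inner ℝ g w : ℝ) / ‖w‖ ^ 2 * ρ w) • w‖ ≤ ‖g‖ * ρ w := by
  rcases eq_or_ne w 0 with rfl | hw
  · simp
    exact mul_nonneg (norm_nonneg g) (hnn 0)
  · have hw0 : 0 < ‖w‖ := norm_pos_iff.mpr hw
    rw [norm_smul, Real.norm_eq_abs, abs_mul, abs_div, abs_of_nonneg (hnn w),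
      abs_of_nonneg (by positivity : (0:ℝ) ≤ ‖w‖ ^ 2)]
    have hin : |(inner ℝ g w : ℝ)| ≤ ‖g‖ * ‖w‖ := abs_real_inner_le_norm g w
    rw [div_mul_eq_mul_div, div_mul_eq_mul_div, div_le_iff₀ (by positivity)]
    have : 0 ≤ ρ w * ‖w‖ := mul_nonneg (hnn w) (norm_nonneg w)
    nlinarith [hnn w, hw0]

lemma M_aesm (g : Euc D) (hρ : Integrable ρ) :
    AEStronglyMeasurable (fun w : Euc D => ((inner ℝ g w : ℝ) / ‖w‖ ^ 2 * ρ w) • w) volume := by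
  have h1 : Measurable fun w : Euc D => (inner ℝ g w : ℝ) / ‖w‖ ^ 2 :=
    ((continuous_const.inner continuous_id).measurable).div (measurable_norm.pow_const 2)
  exact ((h1.aestronglyMeasurable.mul hρ.1).smul aestronglyMeasurable_id)

lemma M_integrable (g : Euc D) (hρ : Integrable ρ) (hnn : ∀ w, 0 ≤ ρ w) :
    Integrable (fun w : Euc D => ((inner ℝ g w : ℝ) / ‖w‖ ^ 2 * ρ w) • w) volume :=
  (hρ.const_mul ‖g‖).mono' (M_aesm g hρ) (ae_of_all _ (normM_le g hnn))

lemma intM (hD : 0 < D) (hρ : Integrable ρ) (hnn : ∀ w, 0 ≤ ρ w)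
    (hrad : ∀ a b : Euc D, ‖a‖ = ‖b‖ → ρ a = ρ b) (h1 : ∫ w, ρ w = 1)
    (hint : ∀ i j : Fin D, Integrable (fun w : Euc D => w i * w j / ‖w‖ ^ 2 * ρ w))
    (hoff : ∀ i j : Fin D, i ≠ j → ∫ w : Euc D, w i * w j / ‖w‖ ^ 2 * ρ w = 0)
    (hdiag : ∀ i : Fin D, ∫ w : Euc D, w i * w i / ‖w‖ ^ 2 * ρ w = (D : ℝ)⁻¹)
    (g : Euc D) :
    ∫ w : Euc D, ((inner ℝ g w : ℝ) / ‖w‖ ^ 2 * ρ w) • w = (D : ℝ)⁻¹ • g := by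
  classical
  have hMint := M_integrable g hρ hnn
  refine PiLp.ext fun i => ?_
  have hproj := ((EuclideanSpace.proj (𝕜 := ℝ) i).integral_comp_comm hMint).symm
  have hl : ((D : ℝ)⁻¹ • g) i = (D : ℝ)⁻¹ * g i := rfl
  have hr : (EuclideanSpace.proj (𝕜 := ℝ) i) (∫ w : Euc D, ((inner ℝ g w : ℝ) / ‖w‖ ^ 2 * ρ w) • w)
      = (∫ w : Euc D, ((inner ℝ g w : ℝ) / ‖w‖ ^ 2 * ρ w) • w) i := rfl
  rw [hl, ← hr, hproj]
  have hpt : ∀ w : Euc D, (EuclideanSpace.proj (𝕜 := ℝ) i) (((inner ℝ g w : ℝ) / ‖w‖ ^ 2 * ρ w) • w)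
      = ∑ j, g j * (w j * w i / ‖w‖ ^ 2 * ρ w) := by
    intro w
    have : (EuclideanSpace.proj (𝕜 := ℝ) i) (((inner ℝ g w : ℝ) / ‖w‖ ^ 2 * ρ w) • w)
        = ((inner ℝ g w : ℝ) / ‖w‖ ^ 2 * ρ w) * w i := rfl
    rw [this]
    have hg : (inner ℝ g w : ℝ) = ∑ j, g j * w j := by
      simp [PiLp.inner_apply, RCLike.inner_apply, map_sum, mul_comm]
    rw [hg, Finset.sum_div, Finset.sum_mul, Finset.sum_mul]
    refine Finset.sum_congr rfl fun j _ => ?_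
    ring
  rw [integral_congr_ae (ae_of_all _ hpt)]
  rw [integral_finset_sum _ (fun j _ => ((hint j i).const_mul (g j)))]
  have : ∀ j ∈ Finset.univ, j ≠ i → (∫ w : Euc D, g j * (w j * w i / ‖w‖ ^ 2 * ρ w)) = 0 := by
    intro j _ hj
    rw [integral_const_mul, hoff j i hj, mul_zero]
  rw [Finset.sum_eq_single_of_mem i (Finset.mem_univ i) this, integral_const_mul, hdiag i]
  ring


lemma intM_all {ρ : Euc D → ℝ} (hD : 0 < D) (hρ : Integrable ρ) (hnn : ∀ w, 0 ≤ ρ w)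
    (hrad : ∀ a b : Euc D, ‖a‖ = ‖b‖ → ρ a = ρ b) (h1 : ∫ w, ρ w = 1)
    (g : Euc D) :
    ∫ w : Euc D, ((inner ℝ g w : ℝ) / ‖w‖ ^ 2 * ρ w) • w = (D : ℝ)⁻¹ • g :=
  intM hD hρ hnn hrad h1 (fun i j => integrable_coord_mul hρ hnn i j)
    (fun i j hij => Q_offdiag hrad hij)
    (fun i => Q_diag hD hρ hnn hrad h1 (fun i j => integrable_coord_mul hρ hnn i j)
      (fun i j => Q_diag_eq hrad i j) i) g

lemma key_est (hD : 0 < D) {Ω : Set (Euc D)} (hΩo : IsOpen Ω)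
    (hnn : ∀ w, 0 ≤ ρ w) (hrad : ∀ a b : Euc D, ‖a‖ = ‖b‖ → ρ a = ρ b)
    (h1 : ∫ w, ρ w = 1)
    (u : Euc D → ℝ) (x : Euc D) (g : Euc D) (r : Euc D → ℝ)
    (hsplit : ∀ y, u x - u y = (inner ℝ g (x - y) : ℝ) + r y)
    (hrm : AEStronglyMeasurable r (volume.restrict Ω))
    {δ δ0 η K : ℝ} (hδ : 0 < δ) (hδ0 : δ ≤ δ0) (hball : ball x δ0 ⊆ Ω)
    (hη : 0 ≤ η) (hK : 0 ≤ K)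
    (hrnear : ∀ y, ‖x - y‖ ≤ δ → |r y| ≤ η * ‖x - y‖)
    (hrfar : ∀ y ∈ Ω, |r y| ≤ K) :
    ‖nlGrad D Ω ρ u x - g‖ ≤
      (D : ℝ) * ((‖g‖ + K / δ) * (∫ w in {w : Euc D | δ / 2 < ‖w‖}, ρ w) + η) := by
  have hρ : Integrable ρ := by
    by_contra h
    rw [integral_undef h] at h1
    norm_num at h1
  set T : Euc D → Euc D := fun w => x - w with hT
  have mp : MeasurePreserving T volume volume := Measure.measurePreserving_sub_left volume x
  have embT : MeasurableEmbedding T := (MeasurableEquiv.subLeft x).measurableEmbedding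
  have hρT : Integrable (fun y => ρ (x - y)) := (mp.integrable_comp_emb embT).mpr hρ
  set M : Euc D → Euc D := fun w => ((inner ℝ g w : ℝ) / ‖w‖ ^ 2 * ρ w) • w with hM
  have hMint : Integrable M volume := M_integrable g hρ hnn
  set rem : Euc D → Euc D := fun y => (r y / ‖x - y‖ ^ 2 * ρ (x - y)) • (x - y) with hrem
  have hdecomp : ∀ y, ((u x - u y) / ‖x - y‖ ^ 2 * ρ (x - y)) • (x - y) = M (x - y) + rem y := by
    intro y
    rw [hsplit y, add_div, add_mul, add_smul]
  have hremnorm : ∀ y, ‖rem y‖ = |r y| * ρ (x - y) / ‖x - y‖ := by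
    intro y
    rcases eq_or_ne y x with rfl | hyx
    · simp [hrem]
    · have hw : x - y ≠ 0 := sub_ne_zero.mpr (Ne.symm hyx)
      have hn : 0 < ‖x - y‖ := norm_pos_iff.mpr hw
      rw [hrem]
      rw [norm_smul, Real.norm_eq_abs, abs_mul, abs_div,
        abs_of_nonneg (hnn _), abs_of_nonneg (by positivity : (0:ℝ) ≤ ‖x - y‖ ^ 2)]
      field_simp
  have hnear_pt : ∀ y, ‖x - y‖ ≤ δ → ‖rem y‖ ≤ η * ρ (x - y) := by
    intro y hy
    rcases eq_or_ne y x with rfl | hyx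
    · simp only [hremnorm]
      simp
      exact mul_nonneg hη (hnn _)
    · have hw : x - y ≠ 0 := sub_ne_zero.mpr (Ne.symm hyx)
      have hn : 0 < ‖x - y‖ := norm_pos_iff.mpr hw
      rw [hremnorm]
      have h2 : |r y| * ρ (x - y) ≤ (η * ‖x - y‖) * ρ (x - y) :=
        mul_le_mul_of_nonneg_right (hrnear y hy) (hnn _)
      rw [div_le_iff₀ hn]
      nlinarith [h2]
  have hfar_pt : ∀ y ∈ Ω, δ < ‖x - y‖ → ‖rem y‖ ≤ K / δ * ρ (x - y) := by
    intro y hy hd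
    have hn : 0 < ‖x - y‖ := lt_trans hδ hd
    rw [hremnorm]
    calc |r y| * ρ (x - y) / ‖x - y‖ ≤ K * ρ (x - y) / δ :=
          div_le_div₀ (mul_nonneg hK (hnn _))
            (mul_le_mul_of_nonneg_right (hrfar y hy) (hnn _)) hδ hd.le
      _ = K / δ * ρ (x - y) := by ring
  have hrem_bd : ∀ y ∈ Ω, ‖rem y‖ ≤ max η (K / δ) * ρ (x - y) := by
    intro y hy
    rcases le_or_gt ‖x - y‖ δ with hle | hgt
    · exact (hnear_pt y hle).trans
        (mul_le_mul_of_nonneg_right (le_max_left _ _) (hnn _))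
    · exact (hfar_pt y hy hgt).trans
        (mul_le_mul_of_nonneg_right (le_max_right _ _) (hnn _))
  have hcont_sub : Continuous fun y : Euc D => x - y := continuous_const.sub continuous_id
  have hrem_aesm : AEStronglyMeasurable rem (volume.restrict Ω) := by
    rw [hrem]
    simp only [div_eq_mul_inv]
    exact ((hrm.mul ((((hcont_sub.norm.pow 2).measurable).inv).aestronglyMeasurable.restrict)).mul
      hρT.aestronglyMeasurable.restrict).smul hcont_sub.aestronglyMeasurable.restrict
  have hremint : IntegrableOn rem Ω := by
    refine Integrable.mono' ((hρT.const_mul (max η (K / δ))).integrableOn) hrem_aesm ?_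
    exact (ae_restrict_iff' hΩo.measurableSet).mpr (ae_of_all _ hrem_bd)
  have hMTL : IntegrableOn (fun y => M (x - y)) Ω :=
    ((mp.integrable_comp_emb embT).mpr hMint).integrableOn
  set S : Set (Euc D) := T ⁻¹' Ω with hSdef
  have hS : MeasurableSet S := hΩo.measurableSet.preimage mp.measurable
  have hTT : T ⁻¹' S = Ω := by
    ext z
    simp [hSdef, hT, sub_sub_cancel]
  have hI1 : ∫ y in Ω, M (x - y) = ∫ w in S, M w := by
    have h := mp.setIntegral_preimage_emb embT M S
    rw [hTT] at h
    exact h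
  have hMall : ∫ w, M w = (D : ℝ)⁻¹ • g := intM_all hD hρ hnn hrad h1 g
  have hSsplit : ∫ w in S, M w = (D : ℝ)⁻¹ • g - ∫ w in Sᶜ, M w := by
    have h := integral_add_compl hS hMint
    rw [hMall] at h
    exact eq_sub_of_add_eq h
  set tail : ℝ := ∫ w in {w : Euc D | δ / 2 < ‖w‖}, ρ w with htaildef
  have htailset : MeasurableSet {w : Euc D | δ / 2 < ‖w‖} :=
    (isOpen_lt continuous_const continuous_norm).measurableSet
  have htail_nonneg : 0 ≤ tail :=
    setIntegral_nonneg htailset fun w _ => hnn w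
  have hmono_tail : ∀ (A : Set (Euc D)), A ⊆ {w : Euc D | δ / 2 < ‖w‖} →
      ∫ w in A, ρ w ≤ tail := by
    intro A hA
    exact setIntegral_mono_set hρ.integrableOn (ae_of_all _ hnn) (HasSubset.Subset.eventuallyLE hA)
  -- complement bound
  have hScomplsub : Sᶜ ⊆ {w : Euc D | δ / 2 < ‖w‖} := by
    intro w hw
    have hnotin : x - w ∉ Ω := hw
    have : x - w ∉ ball x δ0 := fun hmem => hnotin (hball hmem)
    have hdist : δ0 ≤ dist (x - w) x := not_lt.mp (by simpa [ball] using this)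
    have : dist (x - w) x = ‖w‖ := by
      rw [dist_eq_norm]
      simp
    rw [this] at hdist
    have : δ / 2 < δ := by linarith
    exact lt_of_lt_of_le (lt_of_lt_of_le this hδ0) hdist
  have hSc : ‖∫ w in Sᶜ, M w‖ ≤ ‖g‖ * tail := by
    calc ‖∫ w in Sᶜ, M w‖ ≤ ∫ w in Sᶜ, ‖M w‖ := norm_integral_le_integral_norm _
      _ ≤ ∫ w in Sᶜ, ‖g‖ * ρ w := by
          refine setIntegral_mono_on hMint.norm.integrableOn
            ((hρ.const_mul ‖g‖).integrableOn) hS.compl fun w _ => normM_le g hnn w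
      _ = ‖g‖ * ∫ w in Sᶜ, ρ w := integral_const_mul _ _
      _ ≤ ‖g‖ * tail := mul_le_mul_of_nonneg_left (hmono_tail _ hScomplsub) (norm_nonneg g)
  -- remainder bound
  have hint1 : ∫ y, ρ (x - y) = 1 := by
    have := mp.integral_comp embT ρ
    rw [← this] at h1
    exact h1
  have hI2 : ‖∫ y in Ω, rem y‖ ≤ η + K / δ * tail := by
    have hCm : MeasurableSet (closedBall x δ) := measurableSet_closedBall
    have hsplitint := integral_inter_add_diff (μ := volume) (s := Ω) (t := closedBall x δ)
      (f := fun y => ‖rem y‖) hCm hremint.norm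
    have hnear : ∫ y in Ω ∩ closedBall x δ, ‖rem y‖ ≤ η := by
      calc ∫ y in Ω ∩ closedBall x δ, ‖rem y‖
          ≤ ∫ y in Ω ∩ closedBall x δ, η * ρ (x - y) := by
            refine setIntegral_mono_on ((hremint.mono_set Set.inter_subset_left).norm)
              ((hρT.const_mul η).integrableOn) (hΩo.measurableSet.inter hCm) fun y hy => ?_
            have : ‖x - y‖ ≤ δ := by
              have := hy.2
              rw [mem_closedBall, dist_comm, dist_eq_norm] at this
              exact this
            exact hnear_pt y this
        _ ≤ ∫ y, η * ρ (x - y) := by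
            refine setIntegral_le_integral (hρT.const_mul η) (ae_of_all _ fun y => ?_)
            exact mul_nonneg hη (hnn _)
        _ = η := by rw [integral_const_mul, hint1, mul_one]
    have hfar : ∫ y in Ω \ closedBall x δ, ‖rem y‖ ≤ K / δ * tail := by
      have hfarsub : ∀ y ∈ Ω \ closedBall x δ, δ < ‖x - y‖ := by
        intro y hy
        have := hy.2
        rw [mem_closedBall, not_le, dist_comm, dist_eq_norm] at this
        exact this
      have hchg : ∫ y in Ω \ closedBall x δ, ρ (x - y) ≤ tail := by
        set A : Set (Euc D) := Ω \ closedBall x δ with hA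
        set B : Set (Euc D) := T ⁻¹' A with hB
        have hTB : T ⁻¹' B = A := by
          ext z
          simp [hB, hA, hT, sub_sub_cancel]
        have h := mp.setIntegral_preimage_emb embT ρ B
        rw [hTB] at h
        rw [h]
        refine hmono_tail B fun w hw => ?_
        have : δ < ‖x - (x - w)‖ := hfarsub _ hw
        simp only [sub_sub_cancel] at this
        exact lt_trans (by linarith) this
      calc ∫ y in Ω \ closedBall x δ, ‖rem y‖
          ≤ ∫ y in Ω \ closedBall x δ, K / δ * ρ (x - y) := by
            refine setIntegral_mono_on ((hremint.mono_set Set.diff_subset).norm)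
              ((hρT.const_mul (K / δ)).integrableOn) (hΩo.measurableSet.diff hCm)
              fun y hy => hfar_pt y hy.1 (hfarsub y hy)
        _ = K / δ * ∫ y in Ω \ closedBall x δ, ρ (x - y) := integral_const_mul _ _
        _ ≤ K / δ * tail := mul_le_mul_of_nonneg_left hchg (div_nonneg hK hδ.le)
    calc ‖∫ y in Ω, rem y‖ ≤ ∫ y in Ω, ‖rem y‖ := norm_integral_le_integral_norm _
      _ = (∫ y in Ω ∩ closedBall x δ, ‖rem y‖) + ∫ y in Ω \ closedBall x δ, ‖rem y‖ :=
          hsplitint.symm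
      _ ≤ η + K / δ * tail := add_le_add hnear hfar
  -- assemble
  have hDne : (D : ℝ) ≠ 0 := Nat.cast_ne_zero.mpr hD.ne'
  have hgrad : nlGrad D Ω ρ u x
      = (D : ℝ) • (((D : ℝ)⁻¹ • g - ∫ w in Sᶜ, M w) + ∫ y in Ω, rem y) := by
    rw [nlGrad]
    congr 1
    have : (fun y => ((u x - u y) / ‖x - y‖ ^ 2 * ρ (x - y)) • (x - y))
        = fun y => M (x - y) + rem y := funext hdecomp
    rw [this, integral_add hMTL hremint, hI1, hSsplit]
  have hdiff : nlGrad D Ω ρ u x - g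
      = (D : ℝ) • ((∫ y in Ω, rem y) - ∫ w in Sᶜ, M w) := by
    rw [hgrad, smul_add, smul_sub, smul_smul, mul_inv_cancel₀ hDne, one_smul, smul_sub]
    abel
  rw [hdiff, norm_smul, Real.norm_natCast]
  have hnorm : ‖(∫ y in Ω, rem y) - ∫ w in Sᶜ, M w‖
      ≤ (η + K / δ * tail) + ‖g‖ * tail :=
    (norm_sub_le _ _).trans (add_le_add hI2 hSc)
  calc (D : ℝ) * ‖(∫ y in Ω, rem y) - ∫ w in Sᶜ, M w‖
      ≤ (D : ℝ) * ((η + K / δ * tail) + ‖g‖ * tail) :=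
        mul_le_mul_of_nonneg_left hnorm (Nat.cast_nonneg D)
    _ = (D : ℝ) * ((‖g‖ + K / δ) * tail + η) := by ring


lemma convex_fderiv_le {Ω : Set (Euc D)} {u : Euc D → ℝ} (hconv : ConvexOn ℝ Ω u)
    {x y : Euc D} (hx : x ∈ Ω) (hy : y ∈ Ω) {f : Euc D →L[ℝ] ℝ} (hf : HasFDerivAt u f x) :
    f (y - x) ≤ u y - u x := by
  set v : Euc D := y - x with hv
  have hline : HasDerivAt (fun t : ℝ => x + t • v) v 0 := by
    have h1 : HasDerivAt (fun t : ℝ => t • v) ((1 : ℝ) • v) 0 :=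
      (hasDerivAt_id (0 : ℝ)).smul_const v
    simpa using h1.const_add x
  have hx0 : x + (0 : ℝ) • v = x := by simp
  have hfx : HasFDerivAt u f (x + (0 : ℝ) • v) := by rw [hx0]; exact hf
  have hcomp : HasDerivAt (fun t : ℝ => u (x + t • v)) (f v) 0 :=
    hfx.comp_hasDerivAt 0 hline
  have hslope : Tendsto (slope (fun t : ℝ => u (x + t • v)) 0) (𝓝[>] 0) (𝓝 (f v)) :=
    (hasDerivAt_iff_tendsto_slope.mp hcomp).mono_left
      (nhdsWithin_mono 0 fun t ht => ne_of_gt ht)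
  refine le_of_tendsto hslope ?_
  filter_upwards [Ioc_mem_nhdsGT (zero_lt_one)] with t ht
  have ht0 : 0 < t := ht.1
  have ht1 : t ≤ 1 := ht.2
  have hxt : x + t • v = (1 - t) • x + t • y := by
    rw [hv]
    module
  have hcvx : u (x + t • v) ≤ (1 - t) * u x + t * u y := by
    rw [hxt]
    exact hconv.2 hx hy (by linarith) ht0.le (by ring)
  rw [slope_def_field]
  simp only [sub_zero, zero_smul, add_zero]
  rw [div_le_iff₀ ht0]
  nlinarith [hcvx]


end NLAux

open NLAux

set_option maxHeartbeats 1000000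

/-- for convex `u ∈ C¹(Ω̄)` and `x ∈ Ω`, for every `ε > 0` the nonlocal gradient
`∇_n u(x)` is an `ε`-subgradient of `u` at `x` for all sufficiently large `n`:
`u(y) − u(x) ≥ ⟨y − x, ∇_n u(x)⟩ − ε` for all `y ∈ Ω`. -/
theorem nlGrad_eps_subgradient
    (D : ℕ) (hD : 0 < D) (Ω : Set (Euc D)) (hΩ : NiceDomain D Ω)
    (ρ : ℕ → Euc D → ℝ) (hρ : IsKernelSeq D ρ)
    (u : Euc D → ℝ) (hu : ContDiffOn ℝ 1 u (closure Ω))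
    (hconv : ConvexOn ℝ Ω u)
    (x : Euc D) (hx : x ∈ Ω) :
    ∀ ε : ℝ, 0 < ε → ∃ N : ℕ, ∀ n > N, ∀ y ∈ Ω,
      u y - u x ≥ inner ℝ (y - x) (nlGrad D Ω (ρ n) u x) - ε := by
  intro ε hε
  have hxcl : Ω ∈ 𝓝 x := hΩ.isOpen.mem_nhds hx
  have hCD : ContDiffAt ℝ 1 u x := (hu.mono subset_closure).contDiffAt hxcl
  have hdiff : DifferentiableAt ℝ u x := hCD.differentiableAt one_ne_zero
  set f : Euc D →L[ℝ] ℝ := fderiv ℝ u x with hf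
  have hFD : HasFDerivAt u f x := hdiff.hasFDerivAt
  set g : Euc D := (InnerProductSpace.toDual ℝ (Euc D)).symm f with hg
  have hginner : ∀ v : Euc D, (inner ℝ g v : ℝ) = f v := fun v =>
    InnerProductSpace.toDual_symm_apply
  set r : Euc D → ℝ := fun y => u x - u y + f (y - x) with hr
  have hsplit : ∀ y, u x - u y = (inner ℝ g (x - y) : ℝ) + r y := by
    intro y
    rw [hginner]
    have hneg : f (x - y) = -f (y - x) := by
      rw [← map_neg]
      congr 1
      abel
    rw [hneg, hr]
    ring
  have hucont : ContinuousOn u Ω := (hu.continuousOn).mono subset_closure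
  have hrm : AEStronglyMeasurable r (volume.restrict Ω) := by
    apply ContinuousOn.aestronglyMeasurable ?_ hΩ.isOpen.measurableSet
    exact (continuousOn_const.sub hucont).add
      (f.continuous.comp (continuous_id.sub continuous_const)).continuousOn
  obtain ⟨R0, hR0⟩ := hΩ.bounded.subset_closedBall x
  set R : ℝ := max R0 0 with hR
  have hRnn : 0 ≤ R := le_max_right _ _
  have hyR : ∀ y ∈ Ω, ‖y - x‖ ≤ R := by
    intro y hy
    have h := hR0 hy
    rw [mem_closedBall, dist_eq_norm] at h
    exact h.trans (le_max_left _ _)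
  have hcpt : IsCompact (closure Ω) := hΩ.bounded.isCompact_closure
  obtain ⟨C, hC⟩ := hcpt.exists_bound_of_continuousOn hu.continuousOn
  have hC0 : 0 ≤ C := (norm_nonneg (u x)).trans (hC x (subset_closure hx))
  set K : ℝ := 2 * C + ‖f‖ * R with hK
  have hKnn : 0 ≤ K := by positivity
  have hrfar : ∀ y ∈ Ω, |r y| ≤ K := by
    intro y hy
    have h1 : |u x - u y| ≤ 2 * C := by
      have hux := hC x (subset_closure hx)
      have huy := hC y (subset_closure hy)
      have := norm_sub_le (u x) (u y)
      rw [Real.norm_eq_abs] at this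
      linarith
    have h2 : |f (y - x)| ≤ ‖f‖ * R := by
      have hop := f.le_opNorm (y - x)
      rw [Real.norm_eq_abs] at hop
      exact hop.trans (mul_le_mul_of_nonneg_left (hyR y hy) (norm_nonneg f))
    calc |r y| ≤ |u x - u y| + |f (y - x)| := abs_add_le _ _
      _ ≤ K := by rw [hK]; linarith
  set τ : ℝ := ε / (R + 1) with hτ
  have hτpos : 0 < τ := div_pos hε (by linarith)
  have hDpos : (0:ℝ) < D := Nat.cast_pos.mpr hD
  set η : ℝ := τ / (2 * D) with hη
  have hηpos : 0 < η := div_pos hτpos (by positivity)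
  have hlittle : ∀ᶠ y in 𝓝 x, ‖u y - u x - f (y - x)‖ ≤ η * ‖y - x‖ :=
    hFD.isLittleO.def hηpos
  rw [Metric.eventually_nhds_iff] at hlittle
  obtain ⟨δ', hδ'pos, hδ'⟩ := hlittle
  obtain ⟨δ0, hδ0pos, hballsub⟩ := Metric.isOpen_iff.mp hΩ.isOpen x hx
  set δ : ℝ := min (δ' / 2) δ0 with hδdef
  have hδpos : 0 < δ := lt_min (by linarith) hδ0pos
  have hδle : δ ≤ δ0 := min_le_right _ _
  have hrnear : ∀ y, ‖x - y‖ ≤ δ → |r y| ≤ η * ‖x - y‖ := by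
    intro y hy
    have hxy : ‖y - x‖ = ‖x - y‖ := norm_sub_rev y x
    have hdist : dist y x < δ' := by
      rw [dist_eq_norm, hxy]
      calc ‖x - y‖ ≤ δ := hy
        _ ≤ δ' / 2 := min_le_left _ _
        _ < δ' := by linarith
    have hb := hδ' hdist
    rw [Real.norm_eq_abs] at hb
    have habs : |r y| = |u y - u x - f (y - x)| := by
      rw [hr]
      rw [← abs_neg]
      congr 1
      ring
    rw [habs, hxy] at *
    exact hb.trans (le_of_eq rfl)
  set A : ℝ := ‖g‖ + K / δ + 1 with hA
  have hApos : 0 < A := by positivity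
  have htailset : MeasurableSet {w : Euc D | δ / 2 < ‖w‖} :=
    (isOpen_lt continuous_const continuous_norm).measurableSet
  have htail := hρ.tail (δ / 2) (by linarith)
  have hev : ∀ᶠ n in atTop,
      (∫ w in {w : Euc D | δ / 2 < ‖w‖}, ρ n w) < τ / (2 * D * A) :=
    htail.eventually_lt_const (by positivity)
  obtain ⟨N, hN⟩ := eventually_atTop.mp hev
  refine ⟨N, fun n hn y hy => ?_⟩
  have hknorm : ‖nlGrad D Ω (ρ n) u x - g‖ ≤ τ := by
    have hkey := key_est hD hΩ.isOpen (hρ.nonneg n) (fun a b => hρ.radial n a b)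
      (hρ.integral_one n) u x g r hsplit hrm hδpos hδle hballsub hηpos.le hKnn hrnear hrfar
    set t : ℝ := ∫ w in {w : Euc D | δ / 2 < ‖w‖}, ρ n w with ht
    have ht0 : 0 ≤ t := setIntegral_nonneg htailset fun w _ => hρ.nonneg n w
    have htlt : t < τ / (2 * D * A) := hN n hn.le
    have e0 : (‖g‖ + K / δ) * t ≤ A * t := by
      apply mul_le_mul_of_nonneg_right _ ht0
      rw [hA]; linarith
    have e1 : (D : ℝ) * A * t ≤ (D : ℝ) * A * (τ / (2 * D * A)) := by
      apply mul_le_mul_of_nonneg_left htlt.le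
      positivity
    have e2 : (D : ℝ) * A * (τ / (2 * D * A)) = τ / 2 := by
      field_simp
    have e3 : (D : ℝ) * η = τ / 2 := by
      rw [hη]
      field_simp
    refine hkey.trans ?_
    have : (D : ℝ) * ((‖g‖ + K / δ) * t + η) ≤ (D : ℝ) * (A * t + η) := by
      apply mul_le_mul_of_nonneg_left _ hDpos.le
      linarith
    have e4 : (D : ℝ) * (A * t + η) = (D : ℝ) * A * t + (D : ℝ) * η := by ring
    linarith [this, e1, e2, e3, e4]
  have h1 : f (y - x) ≤ u y - u x := convex_fderiv_le hconv hx hy hFD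
  have h2 : (inner ℝ (y - x) (nlGrad D Ω (ρ n) u x) : ℝ)
      = (inner ℝ (y - x) g : ℝ) + (inner ℝ (y - x) (nlGrad D Ω (ρ n) u x - g) : ℝ) := by
    rw [← inner_add_right]
    congr 1
    abel
  have h3 : (inner ℝ (y - x) g : ℝ) = f (y - x) := by
    rw [real_inner_comm]
    exact hginner _
  have h4 : (inner ℝ (y - x) (nlGrad D Ω (ρ n) u x - g) : ℝ)
      ≤ ‖y - x‖ * ‖nlGrad D Ω (ρ n) u x - g‖ := real_inner_le_norm _ _
  have h5 : ‖y - x‖ * ‖nlGrad D Ω (ρ n) u x - g‖ ≤ R * τ :=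
    mul_le_mul (hyR y hy) hknorm (norm_nonneg _) hRnn
  have h6 : R * τ ≤ ε := by
    have hτε : τ * (R + 1) = ε := by
      rw [hτ]
      field_simp
    nlinarith [hτpos, hRnn, hτε]
  rw [ge_iff_le, h2]
  linarith

end
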